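/- Equivalence of recursive formulations: let T̂ be the operator defined exactly like T except that the promise-keeping constraint (ii) is imposed with equality, i.e., Σ_{s ∈ S} λ_s·[(1−δ)·u(a_s, p_s) + δ·w_s] = w, and let V̂* denote the unique bounded fixed point of T̂. Then for every p₀ ∈ [0,1], V*(p₀, m(p₀)) = sup over w ∈ [m(p₀), M(p₀)] of V̂*(p₀, w). -/

import Mathlib

noncomputable section

/-- Expected payoff of action `a` at belief `p` (= probability of state `ω₁`, encoded `true`). -/
def euP {A : Type*} (u : A → Bool → ℝ) (a : A) (p : ℝ) : ℝ :=
  (1 - p) * u a false + p * u a true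

/-- The agent's best static payoff `m(p)` at belief `p`. -/
def mFun {A : Type*} [Fintype A] [Nonempty A] (u : A → Bool → ℝ) (p : ℝ) : ℝ :=
  Finset.univ.sup' Finset.univ_nonempty (fun a => euP u a p)

/-- The agent's full-information payoff `M(p)` at belief `p`. -/
def MFun {A : Type*} [Fintype A] [Nonempty A] (u : A → Bool → ℝ) (p : ℝ) : ℝ :=
  (1 - p) * Finset.univ.sup' Finset.univ_nonempty (fun a => u a false)
    + p * Finset.univ.sup' Finset.univ_nonempty (fun a => u a true)

/-- The set `W` of pairs (belief, promised utility). -/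
def Wset {A : Type*} [Fintype A] [Nonempty A] (u : A → Bool → ℝ) : Set (ℝ × ℝ) :=
  {pw | pw.1 ∈ Set.Icc (0 : ℝ) 1 ∧ mFun u pw.1 ≤ pw.2 ∧ pw.2 ≤ MFun u pw.1}

/-- A family: for each signal a probability, a posterior belief, a promised continuation
utility, and a recommended action. -/
structure Fam (A S : Type*) where
  prob : S → ℝ
  belief : S → ℝ
  promise : S → ℝ
  act : S → A

/-- Feasibility of the family `f` at the point `pw = (p, w) ∈ W`. -/
def Feasible {A S : Type*} [Fintype A] [Nonempty A] [Fintype S]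
    (u : A → Bool → ℝ) (δ : ℝ) (pw : ℝ × ℝ) (f : Fam A S) : Prop :=
  (∀ s, f.prob s ∈ Set.Icc (0 : ℝ) 1) ∧
  (∀ s, (f.belief s, f.promise s) ∈ Wset u) ∧
  (∀ s, (1 - δ) * euP u (f.act s) (f.belief s) + δ * f.promise s ≥ mFun u (f.belief s)) ∧
  (∑ s, f.prob s * ((1 - δ) * euP u (f.act s) (f.belief s) + δ * f.promise s) ≥ pw.2) ∧
  (∑ s, f.prob s * f.belief s = pw.1) ∧
  (∑ s, f.prob s = 1)

/-- The principal's payoff from the family `f`, given continuation value function `V`. -/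
def famPayoff {A S : Type*} [Fintype S] (v : A → Bool → ℝ) (δ : ℝ) (V : ℝ × ℝ → ℝ)
    (f : Fam A S) : ℝ :=
  ∑ s, f.prob s * ((1 - δ) * euP v (f.act s) (f.belief s) + δ * V (f.belief s, f.promise s))

/-- The Bellman operator `T`. -/
def bellman {A S : Type*} [Fintype A] [Nonempty A] [Fintype S]
    (u v : A → Bool → ℝ) (δ : ℝ) (V : ℝ × ℝ → ℝ) (pw : ℝ × ℝ) : ℝ :=
  sSup {x | ∃ f : Fam A S, Feasible u δ pw f ∧ x = famPayoff v δ V f}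

/-- `V` is bounded on `W`. -/
def BddOnW {A : Type*} [Fintype A] [Nonempty A] (u : A → Bool → ℝ) (V : ℝ × ℝ → ℝ) : Prop :=
  ∃ C : ℝ, ∀ pw ∈ Wset u, |V pw| ≤ C

/-- Feasibility with the promise-keeping constraint imposed as an equality. -/
def FeasibleEq {A S : Type*} [Fintype A] [Nonempty A] [Fintype S]
    (u : A → Bool → ℝ) (δ : ℝ) (pw : ℝ × ℝ) (f : Fam A S) : Prop :=
  (∀ s, f.prob s ∈ Set.Icc (0 : ℝ) 1) ∧
  (∀ s, (f.belief s, f.promise s) ∈ Wset u) ∧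
  (∀ s, (1 - δ) * euP u (f.act s) (f.belief s) + δ * f.promise s ≥ mFun u (f.belief s)) ∧
  (∑ s, f.prob s * ((1 - δ) * euP u (f.act s) (f.belief s) + δ * f.promise s) = pw.2) ∧
  (∑ s, f.prob s * f.belief s = pw.1) ∧
  (∑ s, f.prob s = 1)

/-- The Bellman operator `T̂` with promise keeping as an equality. -/
def bellmanEq {A S : Type*} [Fintype A] [Nonempty A] [Fintype S]
    (u v : A → Bool → ℝ) (δ : ℝ) (V : ℝ × ℝ → ℝ) (pw : ℝ × ℝ) : ℝ :=
  sSup {x | ∃ f : Fam A S, FeasibleEq u δ pw f ∧ x = famPayoff v δ V f}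

section AuxLemmas

variable {A S : Type*} [Fintype A] [Nonempty A] [Fintype S]

set_option linter.unusedSectionVars false

lemma euP_le_mFun (u : A → Bool → ℝ) (a : A) (p : ℝ) : euP u a p ≤ mFun u p := by
  unfold mFun; exact Finset.le_sup' (fun a => euP u a p) (Finset.mem_univ a)

lemma exists_opt (u : A → Bool → ℝ) (p : ℝ) : ∃ a : A, euP u a p = mFun u p := by
  obtain ⟨a, _, ha⟩ := Finset.exists_mem_eq_sup' Finset.univ_nonempty (fun a => euP u a p)
  exact ⟨a, ha.symm⟩

lemma euP_le_MFun (u : A → Bool → ℝ) (a : A) {p : ℝ} (hp : p ∈ Set.Icc (0:ℝ) 1) :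
    euP u a p ≤ MFun u p := by
  have h1 : u a false ≤ Finset.univ.sup' Finset.univ_nonempty (fun a => u a false) :=
    Finset.le_sup' (fun a => u a false) (Finset.mem_univ a)
  have h2 : u a true ≤ Finset.univ.sup' Finset.univ_nonempty (fun a => u a true) :=
    Finset.le_sup' (fun a => u a true) (Finset.mem_univ a)
  have hp0 := hp.1; have hp1 := hp.2
  unfold euP MFun
  nlinarith

lemma mFun_le_MFun (u : A → Bool → ℝ) {p : ℝ} (hp : p ∈ Set.Icc (0:ℝ) 1) :
    mFun u p ≤ MFun u p := by
  unfold mFun; exact Finset.sup'_le _ _ fun a _ => euP_le_MFun u a hp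

lemma mFun_zero (u : A → Bool → ℝ) : mFun u 0 = MFun u 0 := by
  unfold mFun MFun
  rw [Finset.sup'_congr Finset.univ_nonempty rfl (g := fun a => u a false)
    (fun a _ => by unfold euP; ring)]
  ring

lemma mFun_one (u : A → Bool → ℝ) : mFun u 1 = MFun u 1 := by
  unfold mFun MFun
  rw [Finset.sup'_congr Finset.univ_nonempty rfl (g := fun a => u a true)
    (fun a _ => by unfold euP; ring)]
  ring

lemma sum_MFun (u : A → Bool → ℝ) {f q : S → ℝ} {p : ℝ}
    (h1 : ∑ s, f s = 1) (hp : ∑ s, f s * q s = p) :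
    ∑ s, f s * MFun u (q s) = MFun u p := by
  unfold MFun
  set c0 := Finset.univ.sup' Finset.univ_nonempty (fun a => u a false)
  set c1 := Finset.univ.sup' Finset.univ_nonempty (fun a => u a true)
  have : ∀ s : S, f s * ((1 - q s) * c0 + q s * c1)
      = f s * c0 + (f s * q s) * (c1 - c0) := fun s => by ring
  rw [Finset.sum_congr rfl (fun s _ => this s), Finset.sum_add_distrib,
    ← Finset.sum_mul, ← Finset.sum_mul, h1, hp]
  ring

lemma sum_euP (u : A → Bool → ℝ) (a : A) {f q : S → ℝ} {p : ℝ}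
    (h1 : ∑ s, f s = 1) (hp : ∑ s, f s * q s = p) :
    ∑ s, f s * euP u a (q s) = euP u a p := by
  unfold euP
  have : ∀ s : S, f s * ((1 - q s) * u a false + q s * u a true)
      = f s * u a false + (f s * q s) * (u a true - u a false) := fun s => by ring
  rw [Finset.sum_congr rfl (fun s _ => this s), Finset.sum_add_distrib,
    ← Finset.sum_mul, ← Finset.sum_mul, h1, hp]
  ring

lemma mFun_convex (u : A → Bool → ℝ) {f q : S → ℝ} {p : ℝ}
    (hf : ∀ s, 0 ≤ f s) (h1 : ∑ s, f s = 1) (hp : ∑ s, f s * q s = p) :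
    mFun u p ≤ ∑ s, f s * mFun u (q s) := by
  unfold mFun
  apply Finset.sup'_le
  intro a _
  rw [← sum_euP u a h1 hp]
  exact Finset.sum_le_sum fun s _ => mul_le_mul_of_nonneg_left (euP_le_mFun u a (q s)) (hf s)

end AuxLemmas
section AuxLemmas2

variable {A S : Type*} [Fintype A] [Nonempty A] [Fintype S]

set_option linter.unusedSectionVars false

/-- A uniform bound on `|euP v a q|` for `q ∈ [0,1]`. -/
def CvBound (v : A → Bool → ℝ) : ℝ :=
  Finset.univ.sup' Finset.univ_nonempty (fun a => |v a false| + |v a true|)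

lemma abs_euP_le (v : A → Bool → ℝ) (a : A) {q : ℝ} (hq : q ∈ Set.Icc (0:ℝ) 1) :
    |euP v a q| ≤ CvBound v := by
  have h : |euP v a q| ≤ |v a false| + |v a true| := by
    unfold euP
    calc |(1-q) * v a false + q * v a true| ≤ |(1-q) * v a false| + |q * v a true| := abs_add_le _ _
    _ = (1-q) * |v a false| + q * |v a true| := by
        rw [abs_mul, abs_mul, abs_of_nonneg (by linarith [hq.2]), abs_of_nonneg hq.1]
    _ ≤ |v a false| + |v a true| := by
        nlinarith [abs_nonneg (v a false), abs_nonneg (v a true), hq.1, hq.2]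
  exact h.trans (Finset.le_sup' (fun a => |v a false| + |v a true|) (Finset.mem_univ a))

lemma feasibleEq_mono (u : A → Bool → ℝ) (δ : ℝ) {p w w' : ℝ} {f : Fam A S}
    (hf : FeasibleEq u δ (p, w') f) (hw : w ≤ w') : Feasible u δ (p, w) f := by
  obtain ⟨h1, h2, h3, h4, h5, h6⟩ := hf
  exact ⟨h1, h2, h3, by rw [h4]; exact hw, h5, h6⟩

lemma famPayoff_le (u v : A → Bool → ℝ) {δ : ℝ} (hδ : δ ∈ Set.Ioo (0:ℝ) 1)
    {V : ℝ × ℝ → ℝ} {C : ℝ} (hC : ∀ pw ∈ Wset u, |V pw| ≤ C)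
    {pw : ℝ × ℝ} {f : Fam A S} (hf : Feasible u δ pw f) :
    famPayoff v δ V f ≤ (1-δ) * CvBound v + δ * C := by
  obtain ⟨hprob, hW, _, _, _, hsum⟩ := hf
  unfold famPayoff
  calc ∑ s, f.prob s * ((1-δ) * euP v (f.act s) (f.belief s) + δ * V (f.belief s, f.promise s))
      ≤ ∑ s, f.prob s * ((1-δ) * CvBound v + δ * C) := by
        apply Finset.sum_le_sum
        intro s _
        apply mul_le_mul_of_nonneg_left _ (hprob s).1
        have h1 : euP v (f.act s) (f.belief s) ≤ CvBound v :=
          (le_abs_self _).trans (abs_euP_le v _ (hW s).1)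
        have h2 : V (f.belief s, f.promise s) ≤ C := (le_abs_self _).trans (hC _ (hW s))
        have hd0 : (0:ℝ) ≤ δ := le_of_lt hδ.1
        have hd1 : (0:ℝ) ≤ 1 - δ := by linarith [hδ.2]
        nlinarith
    _ = (1-δ) * CvBound v + δ * C := by rw [← Finset.sum_mul, hsum, one_mul]

lemma bddAbove_bellmanSet (u v : A → Bool → ℝ) {δ : ℝ} (hδ : δ ∈ Set.Ioo (0:ℝ) 1)
    {V : ℝ × ℝ → ℝ} {C : ℝ} (hC : ∀ pw ∈ Wset u, |V pw| ≤ C) (pw : ℝ × ℝ) :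
    BddAbove {x | ∃ f : Fam A S, Feasible u δ pw f ∧ x = famPayoff v δ V f} := by
  refine ⟨(1-δ) * CvBound v + δ * C, ?_⟩
  rintro x ⟨f, hf, rfl⟩
  exact famPayoff_le u v hδ hC hf

lemma bddAbove_bellmanEqSet (u v : A → Bool → ℝ) {δ : ℝ} (hδ : δ ∈ Set.Ioo (0:ℝ) 1)
    {V : ℝ × ℝ → ℝ} {C : ℝ} (hC : ∀ pw ∈ Wset u, |V pw| ≤ C) (pw : ℝ × ℝ) :
    BddAbove {x | ∃ f : Fam A S, FeasibleEq u δ pw f ∧ x = famPayoff v δ V f} := by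
  refine ⟨(1-δ) * CvBound v + δ * C, ?_⟩
  rintro x ⟨f, hf, rfl⟩
  exact famPayoff_le u v hδ hC (feasibleEq_mono u δ hf le_rfl)

lemma famPayoff_comp (v : A → Bool → ℝ) {δ : ℝ} (hδ0 : 0 ≤ δ)
    {V1 V2 : ℝ × ℝ → ℝ} {c : ℝ} {f : Fam A S}
    (hprob : ∀ s, f.prob s ∈ Set.Icc (0:ℝ) 1) (hsum : ∑ s, f.prob s = 1)
    (hV : ∀ s : S, V1 (f.belief s, f.promise s) ≤ V2 (f.belief s, f.promise s) + c) :
    famPayoff v δ V1 f ≤ famPayoff v δ V2 f + δ * c := by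
  unfold famPayoff
  have key : ∀ s : S,
      f.prob s * ((1-δ) * euP v (f.act s) (f.belief s) + δ * V1 (f.belief s, f.promise s))
      ≤ f.prob s * ((1-δ) * euP v (f.act s) (f.belief s) + δ * V2 (f.belief s, f.promise s))
        + f.prob s * (δ * c) := by
    intro s
    have := hV s
    have h0 := (hprob s).1
    nlinarith [mul_nonneg (mul_nonneg h0 hδ0)
      (by linarith : (0:ℝ) ≤ V2 (f.belief s, f.promise s) + c - V1 (f.belief s, f.promise s))]
  calc ∑ s, f.prob s * ((1-δ) * euP v (f.act s) (f.belief s) + δ * V1 (f.belief s, f.promise s))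
      ≤ ∑ s, (f.prob s * ((1-δ) * euP v (f.act s) (f.belief s)
          + δ * V2 (f.belief s, f.promise s)) + f.prob s * (δ * c)) :=
        Finset.sum_le_sum fun s _ => key s
    _ = famPayoff v δ V2 f + δ * c := by
        rw [Finset.sum_add_distrib, ← Finset.sum_mul, hsum, one_mul]; rfl

end AuxLemmas2
section AuxLemmas3

variable {A S : Type*} [Fintype A] [Nonempty A] [Fintype S] [DecidableEq S]

set_option linter.unusedSectionVars false
set_option maxHeartbeats 1000000

lemma one_point_sum (s₀ : S) (h : S → ℝ) :
    ∑ s, (if s = s₀ then (1:ℝ) else 0) * h s = h s₀ := by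
  simp [ite_mul]

lemma two_point_sum {s₀ s₁ : S} (hne : s₁ ≠ s₀) (a b : ℝ) (h : S → ℝ) :
    ∑ s, (if s = s₁ then a else if s = s₀ then b else 0) * h s = a * h s₁ + b * h s₀ := by
  have key : ∀ s : S, (if s = s₁ then a else if s = s₀ then b else 0) * h s
      = a * (if s = s₁ then h s else 0) + b * (if s = s₀ then h s else 0) := by
    intro s
    by_cases h1 : s = s₁
    · subst h1; rw [if_pos rfl, if_pos rfl, if_neg hne]; ring
    · rw [if_neg h1, if_neg h1]
      by_cases h2 : s = s₀
      · rw [if_pos h2, if_pos h2]; ring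
      · rw [if_neg h2, if_neg h2]; ring
  rw [Finset.sum_congr rfl (fun s _ => key s), Finset.sum_add_distrib,
    ← Finset.mul_sum, ← Finset.mul_sum,
    Finset.sum_ite_eq' Finset.univ s₁ h, Finset.sum_ite_eq' Finset.univ s₀ h]
  simp

lemma continuous_mFun (u : A → Bool → ℝ) : Continuous (mFun u) := by
  unfold mFun
  exact Continuous.finset_sup'_apply Finset.univ_nonempty
    (fun a _ => by unfold euP; fun_prop)

lemma continuous_MFun (u : A → Bool → ℝ) : Continuous (MFun u) := by
  unfold MFun; fun_prop

lemma feasibleEq_nonempty (u : A → Bool → ℝ) {δ : ℝ} (hδ : δ ∈ Set.Ioo (0:ℝ) 1)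
    (hS2 : 2 ≤ Fintype.card S) {p w : ℝ} (hpw : (p, w) ∈ Wset u) :
    ∃ f : Fam A S, FeasibleEq u δ (p, w) f := by
  obtain ⟨hp, hmw, hwM⟩ := hpw
  simp only at hp hmw hwM
  obtain ⟨s₁, s₀, hne⟩ := Fintype.exists_pair_of_one_lt_card (α := S) (by omega)
  have hδ0 : (0:ℝ) < δ := hδ.1
  have hδ1 : δ < 1 := hδ.2
  by_cases hcase : w ≤ (1-δ) * mFun u p + δ * MFun u p
  · -- constant family at belief p
    obtain ⟨a0, ha0⟩ := exists_opt u p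
    set w' := (w - (1-δ) * mFun u p)/δ with hw'
    have hval : (1-δ) * euP u a0 p + δ * w' = w := by
      rw [ha0, hw']; field_simp; ring
    have hw'm : mFun u p ≤ w' := by
      rw [hw', le_div_iff₀ hδ0]; nlinarith
    have hw'M : w' ≤ MFun u p := by
      rw [hw', div_le_iff₀ hδ0]; nlinarith
    refine ⟨⟨fun s => if s = s₀ then 1 else 0, fun _ => p, fun _ => w', fun _ => a0⟩,
      ?_, ?_, ?_, ?_, ?_, ?_⟩
    · intro s; dsimp only; split_ifs <;> constructor <;> norm_num
    · intro s; exact ⟨hp, hw'm, hw'M⟩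
    · intro s; dsimp only; rw [hval]; exact hmw
    · dsimp only
      rw [one_point_sum s₀ (fun _ => (1-δ) * euP u a0 p + δ * w')]
      exact hval
    · dsimp only
      exact one_point_sum s₀ (fun _ => p)
    · simp
  · -- belief splitting via IVT
    push_neg at hcase
    have hmM : mFun u p < MFun u p := by
      by_contra h
      push_neg at h
      nlinarith
    have hp0 : 0 < p := by
      rcases lt_or_eq_of_le hp.1 with h | h
      · exact h
      · exfalso; rw [← h] at hmM; rw [mFun_zero u] at hmM; exact lt_irrefl _ hmM
    have hp1 : p < 1 := by
      rcases lt_or_eq_of_le hp.2 with h | h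
      · exact h
      · exfalso; rw [h] at hmM; rw [mFun_one u] at hmM; exact lt_irrefl _ hmM
    set g : ℝ → ℝ := fun l => l * MFun u 1
      + (1-l) * ((1-δ) * mFun u ((p-l)/(1-l)) + δ * MFun u ((p-l)/(1-l))) with hgdef
    have hqcont : ContinuousOn (fun l => (p-l)/(1-l)) (Set.Icc 0 p) := by
      apply ContinuousOn.div (by fun_prop) (by fun_prop)
      intro x hx
      have : x < 1 := lt_of_le_of_lt hx.2 hp1
      intro h; linarith [sub_eq_zero.mp h]
    have hgcont : ContinuousOn g (Set.Icc 0 p) := by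
      apply ContinuousOn.add (by fun_prop)
      apply ContinuousOn.mul (by fun_prop)
      exact ContinuousOn.add
        (continuousOn_const.mul ((continuous_mFun u).comp_continuousOn hqcont))
        (continuousOn_const.mul ((continuous_MFun u).comp_continuousOn hqcont))
    have hg0 : g 0 = (1-δ) * mFun u p + δ * MFun u p := by
      simp [hgdef]
    have hgp : g p = MFun u p := by
      have h0 : (p - p)/(1-p) = 0 := by simp
      rw [hgdef]
      simp only [h0]
      rw [mFun_zero u]
      unfold MFun; ring
    have hw_mem : w ∈ Set.Icc (g 0) (g p) := by
      rw [hg0, hgp]; exact ⟨le_of_lt hcase, hwM⟩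
    obtain ⟨l, hl, hgl⟩ := intermediate_value_Icc (le_of_lt hp0) hgcont hw_mem
    have hl1 : l < 1 := lt_of_le_of_lt hl.2 hp1
    have hl1' : (0:ℝ) < 1 - l := by linarith
    set q := (p - l)/(1 - l) with hqdef
    have hq0 : 0 ≤ q := div_nonneg (by linarith [hl.2]) (le_of_lt hl1')
    have hq1 : q ≤ 1 := by
      rw [hqdef, div_le_one hl1']; linarith [hp.2]
    have hq01 : q ∈ Set.Icc (0:ℝ) 1 := ⟨hq0, hq1⟩
    obtain ⟨a1, ha1⟩ := exists_opt u 1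
    obtain ⟨aq, haq⟩ := exists_opt u q
    refine ⟨⟨fun s => if s = s₁ then l else if s = s₀ then 1 - l else 0,
      fun s => if s = s₁ then 1 else q,
      fun s => if s = s₁ then mFun u 1 else MFun u q,
      fun s => if s = s₁ then a1 else aq⟩, ?_, ?_, ?_, ?_, ?_, ?_⟩
    · intro s; dsimp only; split_ifs <;> constructor <;> linarith [hl.1, hl.2, hp.2]
    · intro s; dsimp only; split_ifs
      · exact ⟨⟨by norm_num, le_rfl⟩, le_rfl, le_of_eq (mFun_one u)⟩
      · exact ⟨hq01, mFun_le_MFun u hq01, le_rfl⟩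
    · intro s; dsimp only; split_ifs
      · rw [ha1]; nlinarith
      · rw [haq]; nlinarith [mFun_le_MFun u hq01]
    · have := two_point_sum hne l (1-l)
        (fun s => (1-δ) * euP u (if s = s₁ then a1 else aq) (if s = s₁ then 1 else q)
          + δ * (if s = s₁ then mFun u 1 else MFun u q))
      dsimp only
      rw [this]
      simp only [eq_self_iff_true, if_true, if_neg (Ne.symm hne)]
      rw [ha1, haq, ← hgl, hgdef]
      have hm1 : mFun u 1 = MFun u 1 := mFun_one u
      rw [hm1]; ring
    · have := two_point_sum hne l (1-l) (fun s => if s = s₁ then (1:ℝ) else q)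
      dsimp only
      rw [this]
      simp only [eq_self_iff_true, if_true, if_neg (Ne.symm hne)]
      have hql : (1-l) * q = p - l := by rw [hqdef]; field_simp
      linarith
    · have := two_point_sum hne l (1-l) (fun _ => (1:ℝ))
      simp only [mul_one] at this
      simpa using this

end AuxLemmas3
section AuxLemmas4

variable {A S : Type*} [Fintype A] [Nonempty A] [Fintype S] [DecidableEq S]

set_option linter.unusedSectionVars false
set_option maxHeartbeats 1000000

lemma famPayoff_comp2 (v : A → Bool → ℝ) {δ : ℝ} (hδ0 : 0 ≤ δ)
    {V1 V2 : ℝ × ℝ → ℝ} {c : ℝ} {f g : Fam A S}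
    (hprob : ∀ s, 0 ≤ f.prob s) (hsum : ∑ s, f.prob s = 1)
    (hpr : g.prob = f.prob) (hb : g.belief = f.belief) (ha : g.act = f.act)
    (hV : ∀ s : S, V1 (f.belief s, f.promise s) ≤ V2 (g.belief s, g.promise s) + c) :
    famPayoff v δ V1 f ≤ famPayoff v δ V2 g + δ * c := by
  unfold famPayoff
  rw [hpr, hb, ha]
  have key : ∀ s : S,
      f.prob s * ((1-δ) * euP v (f.act s) (f.belief s) + δ * V1 (f.belief s, f.promise s))
      ≤ f.prob s * ((1-δ) * euP v (f.act s) (f.belief s) + δ * V2 (g.belief s, g.promise s))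
        + f.prob s * (δ * c) := by
    intro s
    have h1 := hV s
    have h0 := hprob s
    nlinarith [mul_nonneg (mul_nonneg h0 hδ0)
      (by linarith : (0:ℝ) ≤ V2 (g.belief s, g.promise s) + c - V1 (f.belief s, f.promise s))]
  calc ∑ s, f.prob s * ((1-δ) * euP v (f.act s) (f.belief s) + δ * V1 (f.belief s, f.promise s))
      ≤ ∑ s, (f.prob s * ((1-δ) * euP v (f.act s) (f.belief s)
          + δ * V2 (g.belief s, g.promise s)) + f.prob s * (δ * c)) :=
        Finset.sum_le_sum fun s _ => key s
    _ = _ := by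
        rw [Finset.sum_add_distrib, ← Finset.sum_mul, hsum, one_mul]
        congr 1
        rw [hb]

lemma bellman_set_nonempty (u v : A → Bool → ℝ) {δ : ℝ} (hδ : δ ∈ Set.Ioo (0:ℝ) 1)
    (hS2 : 2 ≤ Fintype.card S) {pw : ℝ × ℝ} (hpw : pw ∈ Wset u) (V : ℝ × ℝ → ℝ) :
    Set.Nonempty {x | ∃ f : Fam A S, Feasible u δ pw f ∧ x = famPayoff v δ V f} := by
  obtain ⟨p, w⟩ := pw
  obtain ⟨f, hf⟩ := feasibleEq_nonempty (S := S) u hδ hS2 hpw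
  exact ⟨famPayoff v δ V f, f, feasibleEq_mono u δ hf le_rfl, rfl⟩

lemma bellman_comp (u v : A → Bool → ℝ) {δ : ℝ} (hδ : δ ∈ Set.Ioo (0:ℝ) 1)
    (hS2 : 2 ≤ Fintype.card S) {V1 V2 : ℝ × ℝ → ℝ} {C2 c : ℝ}
    (hC2 : ∀ pw ∈ Wset u, |V2 pw| ≤ C2)
    (h12 : ∀ qw ∈ Wset u, V1 qw ≤ V2 qw + c) :
    ∀ pw ∈ Wset u, bellman (S := S) u v δ V1 pw ≤ bellman (S := S) u v δ V2 pw + δ * c := by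
  intro pw hpw
  unfold bellman
  apply csSup_le (bellman_set_nonempty u v hδ hS2 hpw V1)
  rintro x ⟨f, hf, rfl⟩
  have step : famPayoff v δ V1 f ≤ famPayoff v δ V2 f + δ * c :=
    famPayoff_comp2 v hδ.1.le (fun s => (hf.1 s).1) hf.2.2.2.2.2 rfl rfl rfl
      (fun s => h12 _ (hf.2.1 s))
  refine step.trans (add_le_add ?_ le_rfl)
  exact le_csSup (bddAbove_bellmanSet u v hδ hC2 pw) ⟨f, hf, rfl⟩

lemma fixed_point_unique (u v : A → Bool → ℝ) {δ : ℝ} (hδ : δ ∈ Set.Ioo (0:ℝ) 1)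
    (hS2 : 2 ≤ Fintype.card S) {V1 V2 : ℝ × ℝ → ℝ} {C1 C2 : ℝ}
    (hb1 : ∀ pw ∈ Wset u, |V1 pw| ≤ C1) (hb2 : ∀ pw ∈ Wset u, |V2 pw| ≤ C2)
    (hfix1 : ∀ pw ∈ Wset u, bellman (S := S) u v δ V1 pw = V1 pw)
    (hfix2 : ∀ pw ∈ Wset u, bellman (S := S) u v δ V2 pw = V2 pw) :
    ∀ pw ∈ Wset u, V1 pw = V2 pw := by
  set K := C1 + C2 with hK
  have hWne : ((0:ℝ), mFun u 0) ∈ Wset u :=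
    ⟨⟨le_rfl, zero_le_one⟩, le_rfl, (mFun_zero u).le⟩
  have hK0 : 0 ≤ K := by
    have h1 := hb1 _ hWne
    have h2 := hb2 _ hWne
    have := abs_nonneg (V1 ((0:ℝ), mFun u 0))
    have := abs_nonneg (V2 ((0:ℝ), mFun u 0))
    simp only [hK]; linarith
  have key : ∀ n : ℕ, ∀ pw ∈ Wset u,
      V1 pw ≤ V2 pw + δ^n * K ∧ V2 pw ≤ V1 pw + δ^n * K := by
    intro n
    induction n with
    | zero =>
      intro pw hpw
      have h1 := abs_le.1 (hb1 pw hpw)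
      have h2 := abs_le.1 (hb2 pw hpw)
      rw [pow_zero, one_mul]
      constructor <;> simp only [hK] <;> linarith [h1.1, h1.2, h2.1, h2.2]
    | succ n ih =>
      intro pw hpw
      have c1 := bellman_comp u v hδ hS2 hb2 (fun qw hqw => (ih qw hqw).1) pw hpw
      have c2 := bellman_comp u v hδ hS2 hb1 (fun qw hqw => (ih qw hqw).2) pw hpw
      rw [hfix1 pw hpw, hfix2 pw hpw] at c1 c2
      have : δ * (δ^n * K) = δ^(n+1) * K := by ring
      rw [this] at c1 c2
      exact ⟨c1, c2⟩
  intro pw hpw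
  have ht : Filter.Tendsto (fun n : ℕ => δ^n * K) Filter.atTop (nhds 0) := by
    have := (tendsto_pow_atTop_nhds_zero_of_lt_one hδ.1.le hδ.2).mul_const K
    simpa using this
  have h1 : V1 pw - V2 pw ≤ 0 :=
    ge_of_tendsto ht (Filter.Eventually.of_forall fun n => by linarith [(key n pw hpw).1])
  have h2 : V2 pw - V1 pw ≤ 0 :=
    ge_of_tendsto ht (Filter.Eventually.of_forall fun n => by linarith [(key n pw hpw).2])
  linarith

end AuxLemmas4
set_option maxHeartbeats 1600000 in
/-- equivalence of the two recursive formulations: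
`V*(p₀, m(p₀)) = sup_{w ∈ [m(p₀), M(p₀)]} V̂*(p₀, w)`. -/
theorem recursive_formulations_equivalent
    {A S : Type*} [Fintype A] [Nonempty A] [Fintype S]
    (u v : A → Bool → ℝ) (δ : ℝ) (astar : A)
    (hδ : δ ∈ Set.Ioo (0 : ℝ) 1)
    (hS2 : 2 ≤ Fintype.card S) (hAS : Fintype.card A ≤ Fintype.card S)
    (hv0 : 0 < v astar false) (hv1 : 0 < v astar true)
    (hvz : ∀ a : A, a ≠ astar → v a false = 0 ∧ v a true = 0)
    (Vstar : ℝ × ℝ → ℝ) (hVb : BddOnW u Vstar)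
    (hVfix : ∀ pw ∈ Wset u, bellman (S := S) u v δ Vstar pw = Vstar pw)
    (Vhat : ℝ × ℝ → ℝ) (hVhb : BddOnW u Vhat)
    (hVhfix : ∀ pw ∈ Wset u, bellmanEq (S := S) u v δ Vhat pw = Vhat pw) :
    ∀ p₀ : ℝ, p₀ ∈ Set.Icc (0 : ℝ) 1 →
      Vstar (p₀, mFun u p₀)
        = sSup ((fun w => Vhat (p₀, w)) '' Set.Icc (mFun u p₀) (MFun u p₀)) := by
  intro p₀ hp₀
  letI : DecidableEq S := Classical.decEq S
  obtain ⟨C0, hC0⟩ := hVhb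
  set C := max C0 0 with hCdef
  have hC : ∀ pw ∈ Wset u, |Vhat pw| ≤ C := fun pw h => (hC0 pw h).trans (le_max_left _ _)
  set Vbar : ℝ × ℝ → ℝ :=
    fun pw => sSup ((fun w' => Vhat (pw.1, w')) '' Set.Icc pw.2 (MFun u pw.1)) with hVbar
  have himg : ∀ p w : ℝ, (p, w) ∈ Wset u →
      ∀ x ∈ (fun w' => Vhat (p, w')) '' Set.Icc w (MFun u p), |x| ≤ C := by
    rintro p w hpw x ⟨w', hw', rfl⟩
    exact hC _ ⟨hpw.1, hpw.2.1.trans hw'.1, hw'.2⟩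
  have hne_img : ∀ p w : ℝ, (p, w) ∈ Wset u →
      ((fun w' => Vhat (p, w')) '' Set.Icc w (MFun u p)).Nonempty :=
    fun p w hpw => ⟨Vhat (p, w), w, ⟨le_rfl, hpw.2.2⟩, rfl⟩
  have hbdd_img : ∀ p w : ℝ, (p, w) ∈ Wset u →
      BddAbove ((fun w' => Vhat (p, w')) '' Set.Icc w (MFun u p)) :=
    fun p w hpw => ⟨C, fun x hx => (abs_le.1 (himg p w hpw x hx)).2⟩
  have hVbarb : ∀ pw ∈ Wset u, |Vbar pw| ≤ C := by
    rintro ⟨p, w⟩ hpw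
    simp only [hVbar]
    rw [abs_le]
    constructor
    · have h1 : -C ≤ Vhat (p, w) := (abs_le.1 (hC _ ⟨hpw.1, hpw.2.1, hpw.2.2⟩)).1
      exact h1.trans (le_csSup (hbdd_img p w hpw) ⟨w, ⟨le_rfl, hpw.2.2⟩, rfl⟩)
    · exact csSup_le (hne_img p w hpw) (fun x hx => (abs_le.1 (himg p w hpw x hx)).2)
  have stepD : ∀ pw ∈ Wset u, bellman (S := S) u v δ Vhat pw ≤ Vbar pw := by
    rintro ⟨p, w⟩ hpw
    unfold bellman
    apply csSup_le (bellman_set_nonempty u v hδ hS2 hpw Vhat)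
    rintro x ⟨f, hf, rfl⟩
    obtain ⟨hprob, hW, hic, hpk, hbel, hsum⟩ := hf
    set w' := ∑ s, f.prob s * ((1-δ) * euP u (f.act s) (f.belief s) + δ * f.promise s)
      with hw'def
    have hw'w : w ≤ w' := hpk
    have hw'M : w' ≤ MFun u p := by
      have key : ∀ s : S, f.prob s * ((1-δ) * euP u (f.act s) (f.belief s) + δ * f.promise s)
          ≤ f.prob s * MFun u (f.belief s) := by
        intro s
        apply mul_le_mul_of_nonneg_left _ (hprob s).1
        have h1 := euP_le_MFun u (f.act s) (hW s).1
        have h2 := (hW s).2.2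
        have hd0 : (0:ℝ) ≤ δ := hδ.1.le
        have hd1 : (0:ℝ) ≤ 1 - δ := by linarith [hδ.2]
        nlinarith
      calc w' ≤ ∑ s, f.prob s * MFun u (f.belief s) := Finset.sum_le_sum fun s _ => key s
        _ = MFun u p := sum_MFun u hsum hbel
    have hfeq : FeasibleEq u δ (p, w') f := ⟨hprob, hW, hic, hw'def.symm, hbel, hsum⟩
    have hWw' : (p, w') ∈ Wset u := ⟨hpw.1, hpw.2.1.trans hw'w, hw'M⟩
    calc famPayoff v δ Vhat f ≤ bellmanEq (S := S) u v δ Vhat (p, w') := by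
          unfold bellmanEq
          exact le_csSup (bddAbove_bellmanEqSet u v hδ hC (p, w')) ⟨f, hfeq, rfl⟩
      _ = Vhat (p, w') := hVhfix _ hWw'
      _ ≤ Vbar (p, w) := by
          simp only [hVbar]
          exact le_csSup (hbdd_img p w hpw) ⟨w', ⟨hw'w, hw'M⟩, rfl⟩
  have stepA : ∀ pw ∈ Wset u, Vbar pw ≤ bellman (S := S) u v δ Vhat pw := by
    rintro ⟨p, w⟩ hpw
    simp only [hVbar]
    apply csSup_le (hne_img p w hpw)
    rintro x ⟨w', hw', rfl⟩
    have hWw' : (p, w') ∈ Wset u := ⟨hpw.1, hpw.2.1.trans hw'.1, hw'.2⟩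
    show Vhat (p, w') ≤ bellman (S := S) u v δ Vhat (p, w)
    rw [← hVhfix _ hWw']
    unfold bellmanEq bellman
    apply csSup_le
    · obtain ⟨f, hf⟩ := feasibleEq_nonempty (S := S) u hδ hS2 hWw'
      exact ⟨_, f, hf, rfl⟩
    rintro y ⟨f, hf, rfl⟩
    exact le_csSup (bddAbove_bellmanSet u v hδ hC (p, w)) ⟨f, feasibleEq_mono u δ hf hw'.1, rfl⟩
  have stepB : ∀ pw ∈ Wset u, bellman (S := S) u v δ Vhat pw
      ≤ bellman (S := S) u v δ Vbar pw := by
    rintro ⟨p, w⟩ hpw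
    unfold bellman
    apply csSup_le (bellman_set_nonempty u v hδ hS2 hpw Vhat)
    rintro x ⟨f, hf, rfl⟩
    have hmono : famPayoff v δ Vhat f ≤ famPayoff v δ Vbar f + δ * 0 := by
      apply famPayoff_comp2 v hδ.1.le (fun s => (hf.1 s).1) hf.2.2.2.2.2 rfl rfl rfl
      intro s
      rw [add_zero]
      simp only [hVbar]
      exact le_csSup (hbdd_img _ _ (hf.2.1 s)) ⟨f.promise s, ⟨le_rfl, (hf.2.1 s).2.2⟩, rfl⟩
    rw [mul_zero, add_zero] at hmono
    exact hmono.trans (le_csSup (bddAbove_bellmanSet u v hδ hVbarb (p, w)) ⟨f, hf, rfl⟩)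
  have stepC : ∀ pw ∈ Wset u, bellman (S := S) u v δ Vbar pw ≤ Vbar pw := by
    rintro ⟨p, w⟩ hpw
    apply le_of_forall_pos_le_add
    intro ε hε
    unfold bellman
    apply csSup_le (bellman_set_nonempty u v hδ hS2 hpw Vbar)
    rintro x ⟨f, hf, rfl⟩
    obtain ⟨hprob, hW, hic, hpk, hbel, hsum⟩ := hf
    have hch : ∀ s : S, ∃ ws, ws ∈ Set.Icc (f.promise s) (MFun u (f.belief s)) ∧
        Vbar (f.belief s, f.promise s) ≤ Vhat (f.belief s, ws) + ε := by
      intro s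
      have hlt : Vbar (f.belief s, f.promise s) - ε < sSup ((fun w' => Vhat (f.belief s, w'))
          '' Set.Icc (f.promise s) (MFun u (f.belief s))) := by
        simp only [hVbar]
        linarith
      obtain ⟨y, hy, hylt⟩ := exists_lt_of_lt_csSup (hne_img _ _ (hW s)) hlt
      obtain ⟨ws, hwsmem, rfl⟩ := hy
      exact ⟨ws, hwsmem, by linarith⟩
    choose ws hws1 hws2 using hch
    set f' : Fam A S := ⟨f.prob, f.belief, ws, f.act⟩ with hf'def
    have hf' : Feasible u δ (p, w) f' := by
      refine ⟨hprob, ?_, ?_, ?_, hbel, hsum⟩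
      · intro s
        exact ⟨(hW s).1, (hW s).2.1.trans (hws1 s).1, (hws1 s).2⟩
      · intro s
        have h0 := hic s
        have h1 := (hws1 s).1
        have hd : (0:ℝ) ≤ δ := hδ.1.le
        show (1-δ) * euP u (f.act s) (f.belief s) + δ * ws s ≥ mFun u (f.belief s)
        nlinarith
      · show ∑ s, f.prob s * ((1-δ) * euP u (f.act s) (f.belief s) + δ * ws s) ≥ w
        have hterm : ∀ s : S,
            f.prob s * ((1-δ) * euP u (f.act s) (f.belief s) + δ * f.promise s)
            ≤ f.prob s * ((1-δ) * euP u (f.act s) (f.belief s) + δ * ws s) := by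
          intro s
          apply mul_le_mul_of_nonneg_left _ (hprob s).1
          have h1 := (hws1 s).1
          have hd : (0:ℝ) ≤ δ := hδ.1.le
          nlinarith
        calc (w:ℝ) ≤ ∑ s, f.prob s * ((1-δ) * euP u (f.act s) (f.belief s) + δ * f.promise s) :=
              hpk
          _ ≤ _ := Finset.sum_le_sum fun s _ => hterm s
    have hcomp : famPayoff v δ Vbar f ≤ famPayoff v δ Vhat f' + δ * ε :=
      famPayoff_comp2 v hδ.1.le (fun s => (hprob s).1) hsum rfl rfl rfl (fun s => hws2 s)
    have hle : famPayoff v δ Vhat f' ≤ bellman (S := S) u v δ Vhat (p, w) := by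
      unfold bellman
      exact le_csSup (bddAbove_bellmanSet u v hδ hC (p, w)) ⟨f', hf', rfl⟩
    have hD := stepD _ hpw
    have hde : δ * ε ≤ ε := by nlinarith [hδ.2, hε.le]
    calc famPayoff v δ Vbar f ≤ Vbar (p, w) + δ * ε := by linarith
      _ ≤ Vbar (p, w) + ε := by linarith
  have hVbarfix : ∀ pw ∈ Wset u, bellman (S := S) u v δ Vbar pw = Vbar pw :=
    fun pw hpw => le_antisymm (stepC pw hpw) ((stepA pw hpw).trans (stepB pw hpw))
  obtain ⟨C1, hC1⟩ := hVb
  have hmain := fixed_point_unique u v hδ hS2 hC1 hVbarb hVfix hVbarfix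
  have hmem : (p₀, mFun u p₀) ∈ Wset u := ⟨hp₀, le_rfl, mFun_le_MFun u hp₀⟩
  rw [hmain _ hmem]
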